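/- There exist constants c > 0 and C > 0 such that for every real k ≥ 1, every δ with 0 < δ ≤ 1, and every s ≥ 0, one has g_{k,δ}(s) ≥ c·s − C. -/

import Mathlib

open Real intervalIntegral

/-- Truncation `T_k(z) = max(0, min(k, z))`. -/
noncomputable def Tk (k z : ℝ) : ℝ := max 0 (min k z)

/-- Regularized entropy density
`g_{k,δ}(s) = ∫₀ˢ (∫₁ʸ dz / (T_k(z) + δ)) dy`. -/
noncomputable def gkd (k δ s : ℝ) : ℝ :=
  ∫ y in (0:ℝ)..s, ∫ z in (1:ℝ)..y, 1 / (Tk k z + δ)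

theorem stmt_19 :
    ∃ c C : ℝ, 0 < c ∧ 0 < C ∧ ∀ k : ℝ, 1 ≤ k → ∀ δ : ℝ, 0 < δ → δ ≤ 1 →
      ∀ s : ℝ, 0 ≤ s → gkd k δ s ≥ c * s - C := by
  refine ⟨1/3, 5, by norm_num, by norm_num, ?_⟩
  intro k hk δ hδ hδ1 s hs
  set f : ℝ → ℝ := fun z => 1 / (Tk k z + δ) with hfdef
  have hden_pos : ∀ z, 0 < Tk k z + δ := fun z =>
    add_pos_of_nonneg_of_pos (le_max_left _ _) hδ
  have hf_cont : Continuous f := by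
    apply continuous_const.div
    · exact (continuous_const.max (continuous_const.min continuous_id)).add continuous_const
    · exact fun z => (hden_pos z).ne'
  have hf_int : ∀ a b : ℝ, IntervalIntegrable f MeasureTheory.volume a b := fun a b =>
    hf_cont.intervalIntegrable a b
  have hf_nonneg : ∀ z, 0 ≤ f z := fun z => by
    have := hden_pos z
    positivity
  set h : ℝ → ℝ := fun y => ∫ z in (1:ℝ)..y, f z with hhdef
  have hh_cont : Continuous h := intervalIntegral.continuous_primitive hf_int 1
  have hh_int : ∀ a b : ℝ, IntervalIntegrable h MeasureTheory.volume a b := fun a b =>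
    hh_cont.intervalIntegrable a b
  -- pointwise bound (A): for 0 < y ≤ 1, h y ≥ -2 * y ^ (-(1/2))
  have hA : ∀ y : ℝ, 0 < y → y ≤ 1 → -2 * y ^ (-(1/2) : ℝ) ≤ h y := by
    intro y hy hy1
    have hlog : Real.log y ≤ h y := by
      have hsymm : h y = -(∫ z in y..(1:ℝ), f z) := by
        simp only [hhdef]
        rw [intervalIntegral.integral_symm]
      have hinv_int : IntervalIntegrable (fun z : ℝ => 1 / z) MeasureTheory.volume y 1 := by
        apply intervalIntegrable_one_div (f := fun x : ℝ => x)
        · intro x hx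
          rw [Set.uIcc_of_le hy1] at hx
          exact (lt_of_lt_of_le hy hx.1).ne'
        · exact continuousOn_id
      have hcomp : (∫ z in y..(1:ℝ), f z) ≤ ∫ z in y..(1:ℝ), 1 / z := by
        apply intervalIntegral.integral_mono_on hy1 (hf_int y 1) hinv_int
        intro x hx
        obtain ⟨hx1, hx2⟩ := hx
        have hx0 : 0 < x := lt_of_lt_of_le hy hx1
        have hTle : x ≤ Tk k x + δ := by
          have h1 : min k x = x := min_eq_right (le_trans hx2 hk)
          have h2 : Tk k x = x := by
            rw [Tk, h1, max_eq_right hx0.le]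
          linarith
        exact one_div_le_one_div_of_le hx0 hTle
      have hval : (∫ z in y..(1:ℝ), 1 / z) = -Real.log y := by
        rw [integral_one_div]
        · rw [one_div, Real.log_inv]
        · intro hmem
          rw [Set.uIcc_of_le hy1] at hmem
          linarith [hmem.1]
      rw [hsymm]
      rw [hval] at hcomp
      linarith
    have hineq : 2 - 2 * y ^ (-(1/2) : ℝ) ≤ Real.log y := by
      have h1 : Real.log (y ^ ((1/2) : ℝ)) = (1/2) * Real.log y := Real.log_rpow hy _
      have hpos : 0 < y ^ ((1/2) : ℝ) := Real.rpow_pos_of_pos hy _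
      have h2 : 1 - (y ^ ((1/2) : ℝ))⁻¹ ≤ Real.log (y ^ ((1/2) : ℝ)) := by
        have := Real.log_le_sub_one_of_pos (inv_pos.mpr hpos)
        rw [Real.log_inv] at this
        linarith
      have h3 : (y ^ ((1/2) : ℝ))⁻¹ = y ^ (-(1/2) : ℝ) := (Real.rpow_neg hy.le _).symm
      rw [h3] at h2
      rw [h1] at h2
      linarith
    have : 0 < y ^ (-(1/2) : ℝ) := Real.rpow_pos_of_pos hy _
    linarith
  -- pointwise bound (B): for y ≥ 1, h y ≥ (1/3) * min (y - 1) 1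
  have hB : ∀ y : ℝ, 1 ≤ y → (1/3) * min (y - 1) 1 ≤ h y := by
    intro y hy
    set m : ℝ := min y 2 with hm
    have hm1 : 1 ≤ m := le_min hy one_le_two
    have hmy : m ≤ y := min_le_left _ _
    have hsplit : h y = (∫ z in (1:ℝ)..m, f z) + ∫ z in m..y, f z :=
      (intervalIntegral.integral_add_adjacent_intervals (hf_int 1 m) (hf_int m y)).symm
    have h2nd : 0 ≤ ∫ z in m..y, f z :=
      intervalIntegral.integral_nonneg hmy (fun x _ => hf_nonneg x)
    have h1st : (m - 1) * (1/3) ≤ ∫ z in (1:ℝ)..m, f z := by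
      have := intervalIntegral.integral_mono_on hm1
        (intervalIntegrable_const (c := (1/3 : ℝ))) (hf_int 1 m)
        (fun x hx => by
          obtain ⟨hx1, hx2⟩ := hx
          have hx2' : x ≤ 2 := le_trans hx2 (min_le_right _ _)
          have hx0 : (0:ℝ) ≤ x := by linarith
          have hTle : Tk k x + δ ≤ 3 := by
            have hmin : min k x ≤ x := min_le_right _ _
            have : Tk k x ≤ x := max_le hx0 hmin
            linarith
          show (1/3 : ℝ) ≤ 1 / (Tk k x + δ)
          rw [le_div_iff₀ (hden_pos x)]
          linarith)
      simpa [intervalIntegral.integral_const, smul_eq_mul] using this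
    have hmin_eq : min (y - 1) 1 = m - 1 := by
      rw [hm]
      rcases le_total y 2 with hc | hc
      · rw [min_eq_left hc, min_eq_left (by linarith)]
      · rw [min_eq_right hc, min_eq_right (by linarith)]
        norm_num
    rw [hmin_eq, hsplit]
    linarith
  -- now bound the outer integral
  have key : gkd k δ s = ∫ y in (0:ℝ)..s, h y := rfl
  rcases le_total s 1 with hs1 | hs1
  · -- small s : use only bound (A)
    have hψint : IntervalIntegrable (fun y : ℝ => -2 * y ^ (-(1/2) : ℝ))
        MeasureTheory.volume 0 s :=
      (intervalIntegrable_rpow' (by norm_num : (-1:ℝ) < -(1/2))).const_mul (-2)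
    have hmono : (∫ y in (0:ℝ)..s, -2 * y ^ (-(1/2) : ℝ)) ≤ ∫ y in (0:ℝ)..s, h y := by
      apply intervalIntegral.integral_mono_ae_restrict hs hψint (hh_int 0 s)
      have hne : ∀ᵐ y : ℝ ∂MeasureTheory.volume, y ≠ 0 := by
        rw [MeasureTheory.ae_iff]
        have : {y : ℝ | ¬ y ≠ 0} = {0} := by ext y; simp
        rw [this]
        exact Real.volume_singleton
      filter_upwards [MeasureTheory.ae_restrict_mem measurableSet_Icc,
        MeasureTheory.ae_restrict_of_ae hne] with y hy hy0
      exact hA y (lt_of_le_of_ne hy.1 (Ne.symm hy0)) (le_trans hy.2 hs1)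
    have hval : (∫ y in (0:ℝ)..s, -2 * y ^ (-(1/2) : ℝ)) = -4 * s ^ ((1/2) : ℝ) := by
      rw [intervalIntegral.integral_const_mul, integral_rpow (Or.inl (by norm_num))]
      rw [Real.zero_rpow (by norm_num)]
      norm_num
      ring
    have hsle : s ^ ((1/2) : ℝ) ≤ 1 := Real.rpow_le_one hs hs1 (by norm_num)
    rw [key]
    have : -4 * s ^ ((1/2) : ℝ) ≥ -4 := by linarith
    have hss : 1/3 * s ≤ 1/3 := by linarith
    linarith
  · -- s ≥ 1 : split at 1
    have hsplit : (∫ y in (0:ℝ)..s, h y)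
        = (∫ y in (0:ℝ)..(1:ℝ), h y) + ∫ y in (1:ℝ)..s, h y :=
      (intervalIntegral.integral_add_adjacent_intervals (hh_int 0 1) (hh_int 1 s)).symm
    -- first part ≥ -4
    have hψint : IntervalIntegrable (fun y : ℝ => -2 * y ^ (-(1/2) : ℝ))
        MeasureTheory.volume 0 1 :=
      (intervalIntegrable_rpow' (by norm_num : (-1:ℝ) < -(1/2))).const_mul (-2)
    have hmono1 : (∫ y in (0:ℝ)..(1:ℝ), -2 * y ^ (-(1/2) : ℝ))
        ≤ ∫ y in (0:ℝ)..(1:ℝ), h y := by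
      apply intervalIntegral.integral_mono_ae_restrict zero_le_one hψint (hh_int 0 1)
      have hne : ∀ᵐ y : ℝ ∂MeasureTheory.volume, y ≠ 0 := by
        rw [MeasureTheory.ae_iff]
        have : {y : ℝ | ¬ y ≠ 0} = {0} := by ext y; simp
        rw [this]
        exact Real.volume_singleton
      filter_upwards [MeasureTheory.ae_restrict_mem measurableSet_Icc,
        MeasureTheory.ae_restrict_of_ae hne] with y hy hy0
      exact hA y (lt_of_le_of_ne hy.1 (Ne.symm hy0)) hy.2
    have hval1 : (∫ y in (0:ℝ)..(1:ℝ), -2 * y ^ (-(1/2) : ℝ)) = -4 := by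
      rw [intervalIntegral.integral_const_mul, integral_rpow (Or.inl (by norm_num))]
      rw [Real.zero_rpow (by norm_num), Real.one_rpow]
      norm_num
    have hpart1 : (-4 : ℝ) ≤ ∫ y in (0:ℝ)..(1:ℝ), h y := by
      rw [hval1] at hmono1; exact hmono1
    -- second part ≥ (s-2)/3
    have hψ1cont : Continuous (fun y : ℝ => (1/3) * min (y - 1) 1) :=
      continuous_const.mul ((continuous_id.sub continuous_const).min continuous_const)
    have hmono2 : (∫ y in (1:ℝ)..s, (1/3) * min (y - 1) 1) ≤ ∫ y in (1:ℝ)..s, h y := by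
      apply intervalIntegral.integral_mono_on hs1 (hψ1cont.intervalIntegrable 1 s)
        (hh_int 1 s)
      intro x hx
      exact hB x hx.1
    have hpart2 : (s - 2) / 3 ≤ ∫ y in (1:ℝ)..s, (1/3) * min (y - 1) 1 := by
      rcases le_total s 2 with hc | hc
      · have hcong : (∫ y in (1:ℝ)..s, (1/3) * min (y - 1) 1)
            = ∫ y in (1:ℝ)..s, (1/3) * (y - 1) := by
          apply intervalIntegral.integral_congr
          intro y hy
          rw [Set.uIcc_of_le hs1] at hy
          have : y - 1 ≤ 1 := by
            have := hy.2; linarith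
          simp [min_eq_left this]
        rw [hcong]
        rw [intervalIntegral.integral_const_mul]
        have : (∫ y in (1:ℝ)..s, (y - 1)) = s^2/2 - s - (1^2/2 - 1) := by
          rw [intervalIntegral.integral_sub intervalIntegrable_id intervalIntegrable_const]
          rw [integral_id, intervalIntegral.integral_const]
          simp
          ring
        rw [this]
        nlinarith [sq_nonneg (s - 1)]
      · have hsplit2 : (∫ y in (1:ℝ)..s, (1/3) * min (y - 1) 1)
            = (∫ y in (1:ℝ)..(2:ℝ), (1/3) * min (y - 1) 1)
              + ∫ y in (2:ℝ)..s, (1/3) * min (y - 1) 1 :=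
          (intervalIntegral.integral_add_adjacent_intervals
            (hψ1cont.intervalIntegrable 1 2) (hψ1cont.intervalIntegrable 2 s)).symm
        have hnn : 0 ≤ ∫ y in (1:ℝ)..(2:ℝ), (1/3) * min (y - 1) 1 := by
          apply intervalIntegral.integral_nonneg one_le_two
          intro x hx
          have : 0 ≤ min (x - 1) 1 := le_min (by linarith [hx.1]) zero_le_one
          positivity
        have htail : (∫ y in (2:ℝ)..s, (1/3) * min (y - 1) 1) = (s - 2) / 3 := by
          have hcong : (∫ y in (2:ℝ)..s, (1/3) * min (y - 1) 1)
              = ∫ y in (2:ℝ)..s, (1/3 : ℝ) := by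
            apply intervalIntegral.integral_congr
            intro y hy
            rw [Set.uIcc_of_le hc] at hy
            have : (1:ℝ) ≤ y - 1 := by linarith [hy.1]
            simp [min_eq_right this]
          rw [hcong, intervalIntegral.integral_const]
          simp
          ring
        rw [hsplit2, htail]
        linarith
    rw [key, hsplit]
    have := le_trans hpart2 hmono2
    linarith
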